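/- arXiv:2510.12543 — 2 statements merged into one kernel-verified Lean document; each statement's English description precedes it below -/
import Mathlib

section
/- Let B1, B2 be two boxes joined by an edge e of G^+. Let V = {B : dist_{G^+}(B, B1) ≤ 1} and let G_local be the graph on vertex set V whose edge set is (E(B) ∩ V×V) \ {e}. Then G_local contains a path from B1 to B2; moreover this path together with e forms a cycle O_e whose vertex set induces a clique in G^+. -/
open Filter Set
open scoped ENNReal NNReal Topology

noncomputable section

def torusDist {d : ℕ} (L : ℝ) (x y : Fin d → ℝ) : ℝ :=
  ⨆ k : Fin d, ⨅ m : ℤ, |x k - y k - m * L|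

lemma torusDist_symm {d : ℕ} (L : ℝ) (x y : Fin d → ℝ) :
    torusDist L x y = torusDist L y x := by
  unfold torusDist
  refine iSup_congr fun k => ?_
  rw [← sInf_range, ← sInf_range]
  congr 1
  ext r
  simp only [Set.mem_range]
  constructor
  · rintro ⟨m, rfl⟩
    refine ⟨-m, ?_⟩
    have h : y k - x k - ((-m : ℤ) : ℝ) * L = -(x k - y k - (m : ℤ) * L) := by
      push_cast; ring
    rw [h, abs_neg]
  · rintro ⟨m, rfl⟩
    refine ⟨-m, ?_⟩
    have h : x k - y k - ((-m : ℤ) : ℝ) * L = -(y k - x k - (m : ℤ) * L) := by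
      push_cast; ring
    rw [h, abs_neg]

def girgGraph {d : ℕ} (L : ℝ) {V : Type*} (pos : V → Fin d → ℝ) (wt : V → ℝ) :
    SimpleGraph V where
  Adj u v := u ≠ v ∧ torusDist L (pos u) (pos v) ^ d ≤ wt u * wt v
  symm := by
    constructor
    intro u v h
    exact ⟨h.1.symm, by rw [torusDist_symm, mul_comm]; exact h.2⟩
  loopless := ⟨fun u h => h.1 rfl⟩

/-- `wLow d i = 2^{d i / 2}`, the lower end of the weight range of a level-`i` box. -/
def wLow (d i : ℕ) : ℝ := (2 : ℝ) ^ ((d : ℝ) * i / 2)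

/-- A box of the tessellation: a level `0 ≤ level ≤ k0` together with the coordinates of
its geometric cell.  Boxes of level `< k0` are the usual boxes and the unique box of level
`k0` is the top box. -/
@[ext]
structure Box (d k0 : ℕ) where
  level : ℕ
  idx : Fin d → ℕ
  level_le : level ≤ k0
  idx_pos : ∀ k, 1 ≤ idx k
  idx_le : ∀ k, idx k ≤ 2 ^ (k0 - level)

instance (d k0 : ℕ) : Finite (Box d k0) := by
  apply Finite.of_injective (fun B : Box d k0 =>
    ((⟨B.level, Nat.lt_succ_of_le B.level_le⟩ : Fin (k0 + 1)),
      fun k => (⟨B.idx k, Nat.lt_succ_of_le ((B.idx_le k).trans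
        (Nat.pow_le_pow_right (by norm_num) (Nat.sub_le k0 B.level)))⟩ : Fin (2 ^ k0 + 1))))
  intro B1 B2 h
  simp only [Prod.mk.injEq, Fin.mk.injEq, funext_iff] at h
  exact Box.ext h.1 (funext fun k => by simpa using h.2 k)

/-- The region of the augmented space `V_w = T × [1, ∞)` occupied by a box. -/
def boxSet (d k0 : ℕ) (D0 : ℝ) (B : Box d k0) : Set ((Fin d → ℝ) × ℝ) :=
  {p | (∀ k, 2 ^ B.level * ((B.idx k : ℝ) - 1) * D0 ≤ p.1 k ∧
          p.1 k < 2 ^ B.level * (B.idx k : ℝ) * D0) ∧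
       wLow d B.level ≤ p.2 ∧ (B.level < k0 → p.2 < wLow d (B.level + 1))}

/-- Translation of an augmented point by an integer multiple of the torus period in
each geometric coordinate. -/
def torusShift {d : ℕ} (L : ℝ) (v : Fin d → ℤ) (p : (Fin d → ℝ) × ℝ) : (Fin d → ℝ) × ℝ :=
  (fun k => p.1 k + (v k : ℝ) * L, p.2)

/-- The closures of `S1` and `S2` intersect (as subsets of the torus, i.e. up to integer
translations of the geometric coordinates) in a set of Hausdorff dimension at least `δ`. -/
def meetsDim {d : ℕ} (L : ℝ) (δ : ℕ) (S1 S2 : Set ((Fin d → ℝ) × ℝ)) : Prop :=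
  ∃ v w : Fin d → ℤ,
    (δ : ℝ≥0∞) ≤ dimH (torusShift L v '' closure S1 ∩ torusShift L w '' closure S2)

/-- The closures of `S1` and `S2` intersect (as subsets of the torus). -/
def meets {d : ℕ} (L : ℝ) (S1 S2 : Set ((Fin d → ℝ) × ℝ)) : Prop :=
  ∃ v w : Fin d → ℤ,
    (torusShift L v '' closure S1 ∩ torusShift L w '' closure S2).Nonempty

/-- The graph `𝓑` on boxes: two boxes are adjacent iff their closures intersect in a
`d`-dimensional set. -/
def boxGraph (d k0 : ℕ) (D0 L : ℝ) : SimpleGraph (Box d k0) where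
  Adj B1 B2 := B1 ≠ B2 ∧ meetsDim L d (boxSet d k0 D0 B1) (boxSet d k0 D0 B2)
  symm := by
    constructor
    rintro B1 B2 ⟨h1, v, w, h⟩
    exact ⟨h1.symm, w, v, by rwa [Set.inter_comm]⟩
  loopless := ⟨fun B h => h.1 rfl⟩

/-- The graph `𝓖⁺` on boxes: two boxes are adjacent iff their closures intersect. -/
def gPlusGraph (d k0 : ℕ) (D0 L : ℝ) : SimpleGraph (Box d k0) where
  Adj B1 B2 := B1 ≠ B2 ∧ meets L (boxSet d k0 D0 B1) (boxSet d k0 D0 B2)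
  symm := by
    constructor
    rintro B1 B2 ⟨h1, v, w, h⟩
    exact ⟨h1.symm, w, v, by rwa [Set.inter_comm]⟩
  loopless := ⟨fun B h => h.1 rfl⟩

/-- The parent of a box: the box of the next level directly above it (the unique box of
minimum volume whose geometric projection strictly contains that of the given box).
The top box is its own parent. -/
def parentBox {d k0 : ℕ} (B : Box d k0) : Box d k0 :=
  if h : B.level < k0 then
    { level := B.level + 1
      idx := fun k => (B.idx k + 1) / 2
      level_le := h
      idx_pos := fun k => by
        have := B.idx_pos k
        show 1 ≤ (B.idx k + 1) / 2
        omega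
      idx_le := fun k => by
        have h1 := B.idx_le k
        have h2 : k0 - B.level = (k0 - (B.level + 1)) + 1 := by omega
        rw [h2, pow_succ] at h1
        show (B.idx k + 1) / 2 ≤ 2 ^ (k0 - (B.level + 1))
        omega }
  else B

lemma parentBox_level_le {d k0 : ℕ} (B : Box d k0) : B.level ≤ (parentBox B).level := by
  unfold parentBox
  split <;> simp

/-- The spanning tree `T_𝓑` of `𝓑`, given by the parent edges. -/
def treeGraph (d k0 : ℕ) : SimpleGraph (Box d k0) where
  Adj B1 B2 := B1 ≠ B2 ∧ (parentBox B1 = B2 ∨ parentBox B2 = B1)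
  symm := by
    constructor
    rintro B1 B2 ⟨h1, h2⟩
    exact ⟨h1.symm, h2.symm⟩
  loopless := ⟨fun B h => h.1 rfl⟩

/-- The subgraph of `G` induced by a set `R` (kept on the ambient vertex type). -/
def onSet {V : Type*} (G : SimpleGraph V) (R : Set V) : SimpleGraph V where
  Adj a b := a ∈ R ∧ b ∈ R ∧ G.Adj a b
  symm := ⟨fun _ _ h => ⟨h.2.1, h.1, h.2.2.symm⟩⟩
  loopless := ⟨fun a h => G.ne_of_adj h.2.2 rfl⟩

section Generic

variable {α : Type*}

/-- `m`-fold ancestor with respect to a parent function. -/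
def ancF (par : α → α) (B : α) (m : ℕ) : α := par^[m] B

/-- Number of steps from `B1` to the lowest common ancestor of `B1` and `B2`. -/
def lcaStepsF (par : α → α) (B1 B2 : α) : ℕ :=
  sInf {m | ∃ m', ancF par B2 m' = ancF par B1 m}

/-- Number of steps from `B2` to the lowest common ancestor of `B1` and `B2`. -/
def lcaStepsF' (par : α → α) (B1 B2 : α) : ℕ :=
  sInf {m | ancF par B2 m = ancF par B1 (lcaStepsF par B1 B2)}

/-- The canonical path `L(B1, B2)`: the unique path between `B1` and `B2` in the spanning
tree given by the parent edges, i.e. the two upward paths to the lowest common ancestor. -/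
def canonPathF (par : α → α) (B1 B2 : α) : Set α :=
  {A | ∃ m ≤ lcaStepsF par B1 B2, ancF par B1 m = A} ∪
    {A | ∃ m ≤ lcaStepsF' par B1 B2, ancF par B2 m = A}

/-- `L'(B1, B2)`: the canonical path together with everything `G⁺`-adjacent to it. -/
def extPathF (par : α → α) (Gp : SimpleGraph α) (B1 B2 : α) : Set α :=
  canonPathF par B1 B2 ∪ {B | ∃ B' ∈ canonPathF par B1 B2, Gp.Adj B B'}

/-- `W(B1, B2)`: `L'(B1, B2)` together with all connected components of inactive elements
(in `G⁺`) meeting `L'(B1, B2)`. -/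
def WsetF (par : α → α) (Gp : SimpleGraph α) (act : α → Prop) (B1 B2 : α) : Set α :=
  extPathF par Gp B1 B2 ∪
    {B | ¬ act B ∧ ∃ B' ∈ extPathF par Gp B1 B2, ¬ act B' ∧
      (onSet Gp {C | ¬ act C}).Reachable B' B}

/-- `S(B1, B2)`: the elements outside `W(B1, B2)` that are `G⁺`-adjacent to it
(they are automatically active). -/
def SsetF (par : α → α) (Gp : SimpleGraph α) (act : α → Prop) (B1 B2 : α) : Set α :=
  {B | B ∉ WsetF par Gp act B1 B2 ∧ ∃ B' ∈ WsetF par Gp act B1 B2, Gp.Adj B B'}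

/-- The boundary of `C` visible from `x`: elements `G⁺`-adjacent to `C` that are connected
to `x` in `𝓑` with `C` removed. -/
def visBoundaryF (Gb Gp : SimpleGraph α) (C : Set α) (x : α) : Set α :=
  {B' | (∃ B'' ∈ C, Gp.Adj B' B'') ∧ (onSet Gb Cᶜ).Reachable x B'}

end Generic

/-- A box is active if it contains the augmented point of at least one vertex. -/
def isActive (d k0 : ℕ) (D0 : ℝ) {V : Type*} (pos : V → Fin d → ℝ) (wt : V → ℝ)
    (B : Box d k0) : Prop :=
  ∃ u, (pos u, wt u) ∈ boxSet d k0 D0 B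

end
noncomputable section Aux6

namespace Stmt6

variable {d k0 : ℕ} {D0 L : ℝ}

/-- Lower endpoint of the geometric interval of a level-`l`, index-`j` cell. -/
def loF (D0 : ℝ) (l j : ℕ) : ℝ := 2 ^ l * ((j : ℝ) - 1) * D0

/-- Upper endpoint. -/
def hiF (D0 : ℝ) (l j : ℕ) : ℝ := 2 ^ l * (j : ℝ) * D0

lemma loF_lt_hiF (hD0 : 0 < D0) (l j : ℕ) : loF D0 l j < hiF D0 l j := by
  unfold loF hiF
  have h2 : (0:ℝ) < 2 ^ l := by positivity
  nlinarith

lemma wLow_lt_wLow (hd : 1 ≤ d) {i j : ℕ} (h : i < j) : wLow d i < wLow d j := by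
  unfold wLow
  rw [Real.rpow_lt_rpow_left_iff (by norm_num : (1:ℝ) < 2)]
  have hd' : (0:ℝ) < d := by exact_mod_cast hd
  have : (i:ℝ) < j := by exact_mod_cast h
  have := mul_lt_mul_of_pos_left this hd'
  linarith

/-- Closure of the weight range of a level-`l` box. -/
def clW (d k0 l : ℕ) : Set ℝ :=
  if l < k0 then Set.Icc (wLow d l) (wLow d (l + 1)) else Set.Ici (wLow d l)

lemma wLow_mem_clW (hd : 1 ≤ d) (l : ℕ) : wLow d l ∈ clW d k0 l := by
  unfold clW; split
  · exact Set.mem_Icc.2 ⟨le_refl _, (wLow_lt_wLow hd (Nat.lt_succ_self l)).le⟩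
  · exact Set.mem_Ici.2 (le_refl _)

lemma wLow_succ_mem_clW (hd : 1 ≤ d) {l : ℕ} (h : l < k0) :
    wLow d (l + 1) ∈ clW d k0 l := by
  unfold clW; rw [if_pos h]
  exact Set.mem_Icc.2 ⟨(wLow_lt_wLow hd (Nat.lt_succ_self l)).le, le_refl _⟩

lemma Icc_subset_clW (l : ℕ) :
    Set.Icc (wLow d l) (wLow d (l + 1)) ⊆ clW d k0 l := by
  unfold clW; split
  · exact subset_rfl
  · exact fun x hx => hx.1

lemma clW_lb {l : ℕ} {ω : ℝ} (h : ω ∈ clW d k0 l) : wLow d l ≤ ω := by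
  unfold clW at h; split at h
  · exact h.1
  · exact Set.mem_Ici.1 h

lemma clW_ub {l : ℕ} {ω : ℝ} (hl : l < k0) (h : ω ∈ clW d k0 l) :
    ω ≤ wLow d (l + 1) := by
  unfold clW at h; rw [if_pos hl] at h; exact h.2

lemma level_close_aux (hd : 1 ≤ d) {l1 l2 : ℕ} (h1 : l1 ≤ k0) (h2' : l2 ≤ k0)
    {ω : ℝ} (hω1 : ω ∈ clW d k0 l1) (hω2 : ω ∈ clW d k0 l2) : l2 ≤ l1 + 1 := by
  by_contra h
  push_neg at h
  have hl1k : l1 < k0 := by omega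
  have := clW_ub hl1k hω1
  have h2 := clW_lb hω2
  have h3 := wLow_lt_wLow (d := d) hd (show l1 + 1 < l2 by omega)
  linarith

/-- `boxLo`/`boxHi`: the geometric interval of a box in coordinate `k`. -/
def boxLo (D0 : ℝ) (B : Box d k0) (k : Fin d) : ℝ := loF D0 B.level (B.idx k)

def boxHi (D0 : ℝ) (B : Box d k0) (k : Fin d) : ℝ := hiF D0 B.level (B.idx k)

lemma boxSet_eq (B : Box d k0) :
    boxSet d k0 D0 B =
      (Set.univ.pi fun k => Set.Ico (boxLo D0 B k) (boxHi D0 B k)) ×ˢ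
        (if B.level < k0 then Set.Ico (wLow d B.level) (wLow d (B.level + 1))
         else Set.Ici (wLow d B.level)) := by
  ext ⟨p1, p2⟩
  by_cases h : B.level < k0 <;>
    simp [boxSet, boxLo, boxHi, loF, hiF, Set.mem_pi, h, forall_and]

lemma closure_boxSet (hd : 1 ≤ d) (hD0 : 0 < D0) (B : Box d k0) :
    closure (boxSet d k0 D0 B) =
      (Set.univ.pi fun k => Set.Icc (boxLo D0 B k) (boxHi D0 B k)) ×ˢ
        clW d k0 B.level := by
  rw [boxSet_eq, closure_prod_eq, closure_pi_set]
  congr 1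
  · refine Set.pi_congr rfl fun k _ => ?_
    exact closure_Ico (loF_lt_hiF hD0 _ _).ne
  · unfold clW; split
    · exact closure_Ico (wLow_lt_wLow hd (Nat.lt_succ_self _)).ne
    · exact closure_Ici _

lemma mem_closure_boxSet (hd : 1 ≤ d) (hD0 : 0 < D0) (B : Box d k0)
    (p : (Fin d → ℝ) × ℝ) :
    p ∈ closure (boxSet d k0 D0 B) ↔
      (∀ k, boxLo D0 B k ≤ p.1 k ∧ p.1 k ≤ boxHi D0 B k) ∧ p.2 ∈ clW d k0 B.level := by
  rw [closure_boxSet hd hD0]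
  simp [Set.mem_pi, Set.mem_Icc, forall_and, Pi.le_def]

end Stmt6

end Aux6
noncomputable section Aux6b

namespace Stmt6

variable {d k0 : ℕ} {D0 L : ℝ}

lemma torusShift_mem {σ : Fin d → ℤ} {S : Set ((Fin d → ℝ) × ℝ)} {p : (Fin d → ℝ) × ℝ} :
    p ∈ torusShift L σ '' S ↔ ((fun k => p.1 k - σ k * L), p.2) ∈ S := by
  constructor
  · rintro ⟨q, hq, rfl⟩
    have h1 : (fun k => (torusShift L σ q).1 k - σ k * L) = q.1 :=
      funext fun k => by simp [torusShift]
    have h2 : (torusShift L σ q).2 = q.2 := rfl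
    rw [h1, h2]
    exact hq
  · intro h
    refine ⟨_, h, ?_⟩
    unfold torusShift
    refine Prod.ext (funext fun k => by dsimp; ring) rfl

lemma dimH_cube (a b : Fin d → ℝ) (h : ∀ k, a k < b k) :
    (d : ℝ≥0∞) ≤ dimH (Set.univ.pi fun k => Set.Icc (a k) (b k)) := by
  have hx : (Set.univ.pi fun k => Set.Ioo (a k) (b k)) ∈
      𝓝 (fun k => (a k + b k) / 2) := by
    refine (isOpen_set_pi Set.finite_univ fun k _ => isOpen_Ioo).mem_nhds ?_
    refine Set.mem_pi.2 fun k _ => ⟨by linarith [h k], by linarith [h k]⟩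
  have hx2 : (Set.univ.pi fun k => Set.Icc (a k) (b k)) ∈
      𝓝 (fun k => (a k + b k) / 2) :=
    Filter.mem_of_superset hx (Set.pi_mono fun k _ => Set.Ioo_subset_Icc_self)
  rw [Real.dimH_of_mem_nhds hx2, Module.finrank_fin_fun]

lemma antilip_pair (w0 : ℝ) :
    AntilipschitzWith 1 (fun y : Fin d → ℝ => ((y, w0) : (Fin d → ℝ) × ℝ)) := by
  refine AntilipschitzWith.of_le_mul_dist fun x y => ?_
  rw [NNReal.coe_one, one_mul, Prod.dist_eq]
  exact le_max_of_le_left le_rfl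

lemma antilip_swap (t : Fin d) (c : ℝ) :
    AntilipschitzWith 1
      (fun y : Fin d → ℝ => ((Function.update y t c, y t) : (Fin d → ℝ) × ℝ)) := by
  refine AntilipschitzWith.of_le_mul_dist fun x y => ?_
  rw [NNReal.coe_one, one_mul]
  refine dist_pi_le_iff dist_nonneg |>.2 fun k => ?_
  rw [Prod.dist_eq]
  by_cases hk : k = t
  · subst hk
    exact le_max_right _ _
  · refine le_max_of_le_left ?_
    calc dist (x k) (y k)
        = dist (Function.update x t c k) (Function.update y t c k) := by
          rw [Function.update_of_ne hk, Function.update_of_ne hk]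
      _ ≤ dist (Function.update x t c) (Function.update y t c) := dist_le_pi_dist _ _ k

/-- If the boxes have dimension-≥-d intersection of suitably shifted closures,
they are `boxGraph`-adjacent. -/
lemma box_adj_sub (hd : 1 ≤ d) (hD0 : 0 < D0) {Y Z : Box d k0} (hne : Y ≠ Z)
    (hsub : ∀ k, boxLo D0 Z k ≤ boxLo D0 Y k ∧ boxHi D0 Y k ≤ boxHi D0 Z k)
    {w0 : ℝ} (hwY : w0 ∈ clW d k0 Y.level) (hwZ : w0 ∈ clW d k0 Z.level) :
    (boxGraph d k0 D0 L).Adj Y Z := by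
  refine ⟨hne, 0, 0, ?_⟩
  have himg : (fun y : Fin d → ℝ => ((y, w0) : (Fin d → ℝ) × ℝ)) ''
      (Set.univ.pi fun k => Set.Icc (boxLo D0 Y k) (boxHi D0 Y k)) ⊆
      torusShift L (0 : Fin d → ℤ) '' closure (boxSet d k0 D0 Y) ∩
        torusShift L (0 : Fin d → ℤ) '' closure (boxSet d k0 D0 Z) := by
    rintro p ⟨y, hy, rfl⟩
    have hy' := Set.mem_pi.1 hy
    constructor
    · rw [torusShift_mem, mem_closure_boxSet hd hD0]
      refine ⟨fun k => ?_, hwY⟩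
      have := hy' k trivial
      simp only [Set.mem_Icc] at this
      constructor <;> simp <;> linarith
    · rw [torusShift_mem, mem_closure_boxSet hd hD0]
      refine ⟨fun k => ?_, hwZ⟩
      have := hy' k trivial
      simp only [Set.mem_Icc] at this
      have hs := hsub k
      constructor <;> simp <;> linarith
  calc (d : ℝ≥0∞) ≤ dimH (Set.univ.pi fun k => Set.Icc (boxLo D0 Y k) (boxHi D0 Y k)) :=
        dimH_cube _ _ fun k => loF_lt_hiF hD0 _ _
    _ ≤ dimH ((fun y : Fin d → ℝ => ((y, w0) : (Fin d → ℝ) × ℝ)) ''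
        (Set.univ.pi fun k => Set.Icc (boxLo D0 Y k) (boxHi D0 Y k))) :=
        (antilip_pair w0).le_dimH_image _
    _ ≤ _ := dimH_mono himg

end Stmt6

end Aux6b
noncomputable section Aux6c

namespace Stmt6

variable {d k0 : ℕ} {D0 L : ℝ}

lemma box_adj_step (hd : 1 ≤ d) (hD0 : 0 < D0) {Y Z : Box d k0} (hne : Y ≠ Z)
    (t : Fin d) (σY σZ : Fin d → ℤ) (c : ℝ)
    (hY : boxLo D0 Y t ≤ c + σY t * L ∧ c + σY t * L ≤ boxHi D0 Y t)
    (hZ : boxLo D0 Z t ≤ c + σZ t * L ∧ c + σZ t * L ≤ boxHi D0 Z t)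
    (hagree : ∀ k, k ≠ t →
      boxLo D0 Y k - σY k * L = boxLo D0 Z k - σZ k * L ∧
      boxHi D0 Y k - σY k * L = boxHi D0 Z k - σZ k * L)
    {w0 w1 : ℝ} (hw : w0 < w1)
    (hwY : Set.Icc w0 w1 ⊆ clW d k0 Y.level)
    (hwZ : Set.Icc w0 w1 ⊆ clW d k0 Z.level) :
    (boxGraph d k0 D0 L).Adj Y Z := by
  refine ⟨hne, -σY, -σZ, ?_⟩
  set Alo : Fin d → ℝ := fun k => if k = t then w0 else boxLo D0 Y k - σY k * L with hAlo
  set Ahi : Fin d → ℝ := fun k => if k = t then w1 else boxHi D0 Y k - σY k * L with hAhi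
  have hAlt : ∀ k, Alo k < Ahi k := by
    intro k
    by_cases hk : k = t <;> simp [hAlo, hAhi, hk]
    · exact hw
    · have := loF_lt_hiF hD0 Y.level (Y.idx k)
      unfold boxLo boxHi
      linarith
  set g : (Fin d → ℝ) → (Fin d → ℝ) × ℝ :=
    fun y => (Function.update y t c, y t) with hg
  have himg : g '' (Set.univ.pi fun k => Set.Icc (Alo k) (Ahi k)) ⊆
      torusShift L (-σY) '' closure (boxSet d k0 D0 Y) ∩
        torusShift L (-σZ) '' closure (boxSet d k0 D0 Z) := by
    rintro p ⟨y, hy, rfl⟩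
    have hy' := Set.mem_pi.1 hy
    have hyt := hy' t trivial
    simp only [hAlo, hAhi, if_pos rfl, Set.mem_Icc] at hyt
    constructor
    · rw [torusShift_mem, mem_closure_boxSet hd hD0]
      constructor
      · intro k
        by_cases hk : k = t
        · subst hk
          simp only [hg, Function.update_self]
          simp only [Pi.neg_apply, Int.cast_neg, sub_neg_eq_add]
          constructor <;> [linarith [hY.1]; linarith [hY.2]]
        · have := hy' k trivial
          simp only [hAlo, hAhi, if_neg hk, Set.mem_Icc] at this
          simp only [hg, Function.update_of_ne hk]
          simp only [Pi.neg_apply, Int.cast_neg, sub_neg_eq_add]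
          constructor <;> linarith [this.1, this.2]
      · exact hwY (Set.mem_Icc.2 hyt)
    · rw [torusShift_mem, mem_closure_boxSet hd hD0]
      constructor
      · intro k
        by_cases hk : k = t
        · subst hk
          simp only [hg, Function.update_self]
          simp only [Pi.neg_apply, Int.cast_neg, sub_neg_eq_add]
          constructor <;> [linarith [hZ.1]; linarith [hZ.2]]
        · have := hy' k trivial
          simp only [hAlo, hAhi, if_neg hk, Set.mem_Icc] at this
          have hag := hagree k hk
          simp only [hg, Function.update_of_ne hk]
          simp only [Pi.neg_apply, Int.cast_neg, sub_neg_eq_add]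
          constructor <;> linarith [this.1, this.2, hag.1, hag.2]
      · exact hwZ (Set.mem_Icc.2 hyt)
  calc (d : ℝ≥0∞) ≤ dimH (Set.univ.pi fun k => Set.Icc (Alo k) (Ahi k)) :=
        dimH_cube _ _ hAlt
    _ ≤ dimH (g '' (Set.univ.pi fun k => Set.Icc (Alo k) (Ahi k))) :=
        (antilip_swap t c).le_dimH_image _
    _ ≤ _ := dimH_mono himg

lemma gplus_of_witness (hd : 1 ≤ d) (hD0 : 0 < D0) {Y Z : Box d k0} (hne : Y ≠ Z)
    (x : Fin d → ℝ) (ω : ℝ) (σY σZ : Fin d → ℤ)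
    (hY : ∀ k, boxLo D0 Y k ≤ x k + σY k * L ∧ x k + σY k * L ≤ boxHi D0 Y k)
    (hωY : ω ∈ clW d k0 Y.level)
    (hZ : ∀ k, boxLo D0 Z k ≤ x k + σZ k * L ∧ x k + σZ k * L ≤ boxHi D0 Z k)
    (hωZ : ω ∈ clW d k0 Z.level) :
    (gPlusGraph d k0 D0 L).Adj Y Z := by
  refine ⟨hne, -σY, -σZ, ⟨(x, ω), ?_, ?_⟩⟩
  · rw [torusShift_mem, mem_closure_boxSet hd hD0]
    refine ⟨fun k => ?_, hωY⟩
    have := hY k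
    simp only [Pi.neg_apply, Int.cast_neg, sub_neg_eq_add]
    constructor <;> linarith [this.1, this.2]
  · rw [torusShift_mem, mem_closure_boxSet hd hD0]
    refine ⟨fun k => ?_, hωZ⟩
    have := hZ k
    simp only [Pi.neg_apply, Int.cast_neg, sub_neg_eq_add]
    constructor <;> linarith [this.1, this.2]

lemma gplus_of_box (hd : 1 ≤ d) {Y Z : Box d k0}
    (h : (boxGraph d k0 D0 L).Adj Y Z) : (gPlusGraph d k0 D0 L).Adj Y Z := by
  obtain ⟨hne, v, w, hdim⟩ := h
  refine ⟨hne, v, w, ?_⟩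
  rw [Set.nonempty_iff_ne_empty]
  intro hemp
  rw [hemp, dimH_empty] at hdim
  have : (d : ℝ≥0∞) = 0 := le_antisymm hdim zero_le
  rw [Nat.cast_eq_zero] at this
  omega

end Stmt6

end Aux6c
noncomputable section Aux6d

namespace Stmt6

variable {d k0 : ℕ} {D0 L : ℝ}

lemma cell_sub (hD0 : 0 < D0) (l s π : ℕ) (hs : 1 ≤ s) (hπ : π = (s + 1) / 2) :
    loF D0 (l + 1) π ≤ loF D0 l s ∧ hiF D0 l s ≤ hiF D0 (l + 1) π := by
  have h1 : 2 * π ≤ s + 1 := by omega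
  have h2 : s ≤ 2 * π := by omega
  have hc1 : (2 : ℝ) * π ≤ (s : ℝ) + 1 := by exact_mod_cast h1
  have hc2 : (s : ℝ) ≤ 2 * π := by exact_mod_cast h2
  have hp : (0 : ℝ) < 2 ^ l := by positivity
  have hpd := mul_pos hp hD0
  unfold loF hiF
  rw [pow_succ]
  constructor
  · nlinarith [mul_le_mul_of_nonneg_left (show (2:ℝ) * π - 2 ≤ (s:ℝ) - 1 by linarith) hpd.le]
  · nlinarith [mul_le_mul_of_nonneg_left hc2 hpd.le]

lemma parent_level {B : Box d k0} (h : B.level < k0) :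
    (parentBox B).level = B.level + 1 := by
  unfold parentBox; rw [dif_pos h]

lemma parent_idx {B : Box d k0} (h : B.level < k0) :
    (parentBox B).idx = fun k => (B.idx k + 1) / 2 := by
  unfold parentBox; rw [dif_pos h]

lemma parent_sub (hD0 : 0 < D0) {B : Box d k0} (h : B.level < k0) (k : Fin d) :
    boxLo D0 (parentBox B) k ≤ boxLo D0 B k ∧ boxHi D0 B k ≤ boxHi D0 (parentBox B) k := by
  unfold boxLo boxHi
  rw [parent_level h, parent_idx h]
  exact cell_sub hD0 B.level (B.idx k) _ (B.idx_pos k) rfl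

lemma top_unique {X Y : Box d k0} (hX : X.level = k0) (hY : Y.level = k0) : X = Y := by
  refine Box.ext (hX.trans hY.symm) (funext fun k => ?_)
  have h1 := X.idx_le k
  have h2 := X.idx_pos k
  have h3 := Y.idx_le k
  have h4 := Y.idx_pos k
  rw [hX, Nat.sub_self, pow_zero] at h1
  rw [hY, Nat.sub_self, pow_zero] at h3
  omega

lemma lt_top_of_same {B1 B2 : Box d k0} (hne : B1 ≠ B2) (h : B1.level = B2.level) :
    B1.level < k0 := by
  rcases lt_or_eq_of_le B1.level_le with h' | h'
  · exact h'
  · exact absurd (top_unique h' (h ▸ h')) hne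

lemma box_ne_of_idx {X Y : Box d k0} {k : Fin d} (h : X.idx k ≠ Y.idx k) : X ≠ Y :=
  fun he => h (by rw [he])

lemma box_ne_of_level {X Y : Box d k0} (h : X.level ≠ Y.level) : X ≠ Y :=
  fun he => h (by rw [he])

lemma exists_sibling (hd : 1 ≤ d) (hD0 : 0 < D0) {C : Box d k0} (h : C.level < k0) :
    ∃ Sb : Box d k0, Sb ≠ C ∧ Sb ≠ parentBox C ∧ Sb.level = C.level ∧
      (boxGraph d k0 D0 L).Adj C Sb ∧ (boxGraph d k0 D0 L).Adj Sb (parentBox C) := by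
  set t0 : Fin d := ⟨0, hd⟩ with ht0
  set j : ℕ := C.idx t0 with hj
  have hj1 : 1 ≤ j := C.idx_pos t0
  have hjle : j ≤ 2 ^ (k0 - C.level) := C.idx_le t0
  have hM : 2 ^ (k0 - C.level) = 2 * 2 ^ (k0 - C.level - 1) := by
    rw [← pow_succ']
    congr 1
    omega
  set s : ℕ := if j % 2 = 0 then j - 1 else j + 1 with hs
  have hs1 : 1 ≤ s := by rw [hs]; split <;> omega
  have hsle : s ≤ 2 ^ (k0 - C.level) := by rw [hs, hM]; rw [hM] at hjle; split <;> omega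
  have hsj : s ≠ j := by rw [hs]; split <;> omega
  have hpar : (s + 1) / 2 = (j + 1) / 2 := by rw [hs]; split <;> omega
  set Sb : Box d k0 :=
    ⟨C.level, Function.update C.idx t0 s, C.level_le,
      fun k => by
        by_cases hk : k = t0
        · subst hk; rw [Function.update_self]; exact hs1
        · rw [Function.update_of_ne hk]; exact C.idx_pos k,
      fun k => by
        by_cases hk : k = t0
        · subst hk; rw [Function.update_self]; exact hsle
        · rw [Function.update_of_ne hk]; exact C.idx_le k⟩ with hSb
  have hSbj : Sb.idx t0 = s := by rw [hSb]; simp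
  have hSbne : Sb ≠ C := box_ne_of_idx (k := t0) (by rw [hSbj]; exact hsj)
  have hlvlp := parent_level h
  have hSbnp : Sb ≠ parentBox C := box_ne_of_level (by rw [hlvlp]; simp [hSb])
  have hC1 : Sb.level = C.level := rfl
  refine ⟨Sb, hSbne, hSbnp, hC1, ?_, ?_⟩
  · -- C and Sb are adjacent: they share a facet
    set c : ℝ := if j % 2 = 0 then boxLo D0 C t0 else boxHi D0 C t0 with hc
    have hlh := loF_lt_hiF hD0 C.level j
    have hlh2 := loF_lt_hiF hD0 C.level s
    refine box_adj_step hd hD0 hSbne.symm t0 0 0 c ?_ ?_ ?_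
      (wLow_lt_wLow hd (Nat.lt_succ_self C.level)) (Icc_subset_clW _) ?_
    · -- c in C's interval
      simp only [Pi.zero_apply, Int.cast_zero, zero_mul, add_zero, hc]
      have hlh' : boxLo D0 C t0 < boxHi D0 C t0 := loF_lt_hiF hD0 _ _
      split
      · exact ⟨le_rfl, hlh'.le⟩
      · exact ⟨hlh'.le, le_rfl⟩
    · -- c in Sb's interval
      simp only [Pi.zero_apply, Int.cast_zero, zero_mul, add_zero, hc]
      have : boxLo D0 Sb t0 = loF D0 C.level s := by unfold boxLo; rw [hC1, hSbj]
      have h2 : boxHi D0 Sb t0 = hiF D0 C.level s := by unfold boxHi; rw [hC1, hSbj]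
      rw [this, h2]
      unfold boxLo boxHi
      by_cases hpar2 : j % 2 = 0
      · -- s = j - 1 : hiF s = loF j = c
        have hsval : s = j - 1 := by omega
        have hcast : (s : ℝ) = (j : ℝ) - 1 := by
          rw [hsval]
          push_cast [hj1]
          ring
        rw [if_pos hpar2]
        unfold loF hiF
        rw [hcast]
        constructor
        · nlinarith [pow_pos (show (0:ℝ) < 2 by norm_num) C.level, hD0]
        · exact le_rfl
      · have hsval : s = j + 1 := by omega
        have hcast : (s : ℝ) - 1 = (j : ℝ) := by rw [hsval]; push_cast; ring
        rw [if_neg hpar2]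
        unfold loF hiF
        rw [hcast]
        constructor
        · exact le_rfl
        · nlinarith [mul_pos (pow_pos (show (0:ℝ) < 2 by norm_num) C.level) hD0,
            (show ((C.idx t0 : ℕ) : ℝ) = (s : ℝ) - 1 by rw [← hj]; linarith [hcast])]
    · intro k hk
      have : Sb.idx k = C.idx k := by rw [hSb]; simp [Function.update_of_ne hk]
      unfold boxLo boxHi
      rw [hC1, this]
      exact ⟨by ring, by ring⟩
    · rw [hC1]; exact Icc_subset_clW _
  · -- Sb and parent C adjacent: containment
    refine box_adj_sub hd hD0 hSbnp ?_ (wLow_succ_mem_clW hd (by rw [hC1]; exact h))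
      (by rw [hlvlp, hC1]; exact wLow_mem_clW hd _)
    intro k
    by_cases hk : k = t0
    · subst hk
      have h1 : boxLo D0 Sb t0 = loF D0 C.level s := by unfold boxLo; rw [hC1, hSbj]
      have h2 : boxHi D0 Sb t0 = hiF D0 C.level s := by unfold boxHi; rw [hC1, hSbj]
      have h3 : boxLo D0 (parentBox C) t0 = loF D0 (C.level + 1) ((j + 1) / 2) := by
        unfold boxLo; rw [hlvlp, parent_idx h]
      have h4 : boxHi D0 (parentBox C) t0 = hiF D0 (C.level + 1) ((j + 1) / 2) := by
        unfold boxHi; rw [hlvlp, parent_idx h]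
      rw [h1, h2, h3, h4]
      have := cell_sub hD0 C.level s ((j + 1) / 2) hs1 hpar.symm
      exact ⟨this.1, this.2⟩
    · have hidx : Sb.idx k = C.idx k := by rw [hSb]; simp [Function.update_of_ne hk]
      have h1 : boxLo D0 Sb k = boxLo D0 C k := by unfold boxLo; rw [hC1, hidx]
      have h2 : boxHi D0 Sb k = boxHi D0 C k := by unfold boxHi; rw [hC1, hidx]
      rw [h1, h2]
      exact parent_sub hD0 h k

lemma walk_support_mem {V : Type*} {G : SimpleGraph V} {S : Set V} :
    ∀ {u v : V} (w : (onSet G S).Walk u v), u ∈ S → ∀ x ∈ w.support, x ∈ S := by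
  intro u v w
  induction w with
  | nil =>
    intro hu x hx
    rw [SimpleGraph.Walk.support_nil, List.mem_singleton] at hx
    exact hx ▸ hu
  | cons h p ih =>
    intro hu x hx
    rw [SimpleGraph.Walk.support_cons] at hx
    rcases List.mem_cons.1 hx with rfl | hx'
    · exact hu
    · exact ih h.2.1 x hx'

lemma build (hd : 1 ≤ d) {B1 B2 : Box d k0} (S : Set (Box d k0)) (hB1 : B1 ∈ S)
    (hclique : S.Pairwise (gPlusGraph d k0 D0 L).Adj)
    (hreach : (onSet ((boxGraph d k0 D0 L).deleteEdges {s(B1, B2)}) S).Reachable B1 B2) :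
    ∃ p : (onSet ((boxGraph d k0 D0 L).deleteEdges {s(B1, B2)})
        {B | B = B1 ∨ (gPlusGraph d k0 D0 L).Adj B B1}).Walk B1 B2,
      p.IsPath ∧ ∀ a ∈ p.support, ∀ b ∈ p.support, a ≠ b →
        (gPlusGraph d k0 D0 L).Adj a b := by
  classical
  obtain ⟨w⟩ := hreach
  have hsup : ∀ x ∈ (w.toPath).val.support, x ∈ S :=
    fun x hx => walk_support_mem w hB1 x (SimpleGraph.Walk.support_toPath_subset w hx)
  have hSV : ∀ x ∈ S, x ∈ {B | B = B1 ∨ (gPlusGraph d k0 D0 L).Adj B B1} := by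
    intro x hx
    by_cases hxB : x = B1
    · exact Or.inl hxB
    · exact Or.inr (hclique hx hB1 hxB)
  have hle : onSet ((boxGraph d k0 D0 L).deleteEdges {s(B1, B2)}) S ≤
      onSet ((boxGraph d k0 D0 L).deleteEdges {s(B1, B2)})
        {B | B = B1 ∨ (gPlusGraph d k0 D0 L).Adj B B1} :=
    fun a b hab => ⟨hSV _ hab.1, hSV _ hab.2.1, hab.2.2⟩
  have hedges : ∀ e ∈ (w.toPath).val.edges,
      e ∈ (onSet ((boxGraph d k0 D0 L).deleteEdges {s(B1, B2)})
        {B | B = B1 ∨ (gPlusGraph d k0 D0 L).Adj B B1}).edgeSet :=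
    fun e he' => SimpleGraph.edgeSet_mono hle
      ((w.toPath).val.edges_subset_edgeSet he')
  refine ⟨(w.toPath).val.transfer _ hedges,
    (w.toPath.2).transfer _, ?_⟩
  intro a ha b hb hne
  rw [SimpleGraph.Walk.support_transfer] at ha hb
  exact hclique (hsup a ha) (hsup b hb) hne

end Stmt6

end Aux6d
open Stmt6 in
/-- Let `B1, B2` be two boxes joined by an edge `e` of `𝓖⁺`.  In the graph
`G_local` on the vertex set `V = {B : dist_{𝓖⁺}(B, B1) ≤ 1}` whose edges are the edges of `𝓑`
inside `V` minus `e`, there is a path from `B1` to `B2`; moreover this path together with `e`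
forms a cycle whose vertex set induces a clique in `𝓖⁺`. -/
theorem statement_6 (d : ℕ) (hd : 1 ≤ d) (n k0 : ℕ) (D0 : ℝ) (hD0 : 0 < D0)
    (hn : (n : ℝ) ^ ((1 : ℝ) / d) = D0 * 2 ^ k0)
    (B1 B2 : Box d k0)
    (he : (gPlusGraph d k0 D0 ((n : ℝ) ^ ((1 : ℝ) / d))).Adj B1 B2) :
    ∃ p : (onSet
        ((boxGraph d k0 D0 ((n : ℝ) ^ ((1 : ℝ) / d))).deleteEdges {s(B1, B2)})
        {B | B = B1 ∨ (gPlusGraph d k0 D0 ((n : ℝ) ^ ((1 : ℝ) / d))).Adj B B1}).Walk B1 B2,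
      p.IsPath ∧
      ∀ a ∈ p.support, ∀ b ∈ p.support, a ≠ b →
        (gPlusGraph d k0 D0 ((n : ℝ) ^ ((1 : ℝ) / d))).Adj a b := by
  classical
  set L : ℝ := (n : ℝ) ^ ((1 : ℝ) / d) with hLdef
  have he' := he
  obtain ⟨hne, v, w, hmeet⟩ := he
  obtain ⟨p0, hp1, hp2⟩ := hmeet
  rw [Stmt6.torusShift_mem, Stmt6.mem_closure_boxSet hd hD0] at hp1 hp2
  set x : Fin d → ℝ := fun k => p0.1 k - w k * L with hxdef
  set u : Fin d → ℤ := fun k => w k - v k with hudef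
  have hWB2 : ∀ k, boxLo D0 B2 k ≤ x k + ((0 : ℤ) : ℝ) * L ∧
      x k + ((0 : ℤ) : ℝ) * L ≤ boxHi D0 B2 k := by
    intro k
    have h2 := hp2.1 k
    have hxe : x k + ((0 : ℤ) : ℝ) * L = p0.1 k - w k * L := by
      rw [hxdef]; push_cast; ring
    rw [hxe]
    exact h2
  have hWB1 : ∀ k, boxLo D0 B1 k ≤ x k + ((u k : ℤ) : ℝ) * L ∧
      x k + ((u k : ℤ) : ℝ) * L ≤ boxHi D0 B1 k := by
    intro k
    have h1 := hp1.1 k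
    have hxe : x k + ((u k : ℤ) : ℝ) * L = p0.1 k - v k * L := by
      rw [hxdef, hudef]; push_cast; ring
    rw [hxe]
    exact h1
  have hω1 : p0.2 ∈ clW d k0 B1.level := hp1.2
  have hω2 : p0.2 ∈ clW d k0 B2.level := hp2.2
  have hl21 : B2.level ≤ B1.level + 1 :=
    level_close_aux hd B1.level_le B2.level_le hω1 hω2
  have hl12 : B1.level ≤ B2.level + 1 :=
    level_close_aux hd B2.level_le B1.level_le hω2 hω1
  by_cases hD1 : parentBox B1 = B2
  · -- B2 is the parent of B1 : detour through a sibling of B1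
    have hlk : B1.level < k0 := by
      by_contra hlk
      apply hne
      rw [← hD1]
      unfold parentBox
      rw [dif_neg hlk]
    obtain ⟨Sb, hSbC, hSbP, hSblvl, hadj1, hadj2⟩ :=
      Stmt6.exists_sibling (L := L) hd hD0 hlk
    rw [hD1] at hSbP hadj2
    set S : Set (Box d k0) := {B1, Sb, B2} with hS
    have hclique : S.Pairwise (gPlusGraph d k0 D0 L).Adj := by
      have g1 : (gPlusGraph d k0 D0 L).Adj B1 Sb := gplus_of_box hd hadj1
      have g2 : (gPlusGraph d k0 D0 L).Adj Sb B2 := gplus_of_box hd hadj2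
      intro a ha b hb hab
      simp only [hS, Set.mem_insert_iff, Set.mem_singleton_iff] at ha hb
      rcases ha with rfl | rfl | rfl <;> rcases hb with rfl | rfl | rfl <;>
        first
          | exact absurd rfl hab
          | exact g1 | exact g1.symm | exact g2 | exact g2.symm
          | exact he' | exact he'.symm
    have e1 : (onSet ((boxGraph d k0 D0 L).deleteEdges {s(B1, B2)}) S).Adj B1 Sb := by
      refine ⟨by simp [hS], by simp [hS], ?_⟩
      rw [SimpleGraph.deleteEdges_adj]
      refine ⟨hadj1, ?_⟩
      simp only [Set.mem_singleton_iff, Sym2.eq_iff]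
      rintro (⟨-, h⟩ | ⟨h, -⟩)
      exacts [hSbP h, hne h]
    have e2 : (onSet ((boxGraph d k0 D0 L).deleteEdges {s(B1, B2)}) S).Adj Sb B2 := by
      refine ⟨by simp [hS], by simp [hS], ?_⟩
      rw [SimpleGraph.deleteEdges_adj]
      refine ⟨hadj2, ?_⟩
      simp only [Set.mem_singleton_iff, Sym2.eq_iff]
      rintro (⟨h, -⟩ | ⟨h, -⟩)
      exacts [hSbC h, hSbP h]
    exact build hd S (by simp [hS]) hclique (e1.reachable.trans e2.reachable)
  by_cases hD2 : parentBox B2 = B1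
  · -- B1 is the parent of B2 : detour through a sibling of B2
    have hlk : B2.level < k0 := by
      by_contra hlk
      apply hne
      rw [← hD2]
      unfold parentBox
      rw [dif_neg hlk]
    obtain ⟨Sb, hSbC, hSbP, hSblvl, hadj1, hadj2⟩ :=
      Stmt6.exists_sibling (L := L) hd hD0 hlk
    rw [hD2] at hSbP hadj2
    set S : Set (Box d k0) := {B1, Sb, B2} with hS
    have hclique : S.Pairwise (gPlusGraph d k0 D0 L).Adj := by
      have g1 : (gPlusGraph d k0 D0 L).Adj B2 Sb := gplus_of_box hd hadj1
      have g2 : (gPlusGraph d k0 D0 L).Adj Sb B1 := gplus_of_box hd hadj2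
      intro a ha b hb hab
      simp only [hS, Set.mem_insert_iff, Set.mem_singleton_iff] at ha hb
      rcases ha with rfl | rfl | rfl <;> rcases hb with rfl | rfl | rfl <;>
        first
          | exact absurd rfl hab
          | exact g1 | exact g1.symm | exact g2 | exact g2.symm
          | exact he' | exact he'.symm
    have e1 : (onSet ((boxGraph d k0 D0 L).deleteEdges {s(B1, B2)}) S).Adj B1 Sb := by
      refine ⟨by simp [hS], by simp [hS], ?_⟩
      rw [SimpleGraph.deleteEdges_adj]
      refine ⟨hadj2.symm, ?_⟩
      simp only [Set.mem_singleton_iff, Sym2.eq_iff]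
      rintro (⟨-, h⟩ | ⟨h, -⟩)
      exacts [hSbC h, hne h]
    have e2 : (onSet ((boxGraph d k0 D0 L).deleteEdges {s(B1, B2)}) S).Adj Sb B2 := by
      refine ⟨by simp [hS], by simp [hS], ?_⟩
      rw [SimpleGraph.deleteEdges_adj]
      refine ⟨hadj1.symm, ?_⟩
      simp only [Set.mem_singleton_iff, Sym2.eq_iff]
      rintro (⟨h, -⟩ | ⟨h, -⟩)
      exacts [hSbP h, hSbC h]
    exact build hd S (by simp [hS]) hclique (e1.reachable.trans e2.reachable)
  · -- general case
    have hl1le := B1.level_le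
    have hl2le := B2.level_le
    have hsame_lt : B1.level = B2.level → B1.level < k0 := fun hq => lt_top_of_same hne hq
    set μ : ℕ := if B1.level = B2.level then B1.level + 1 else max B1.level B2.level with hμ
    have hμk : μ ≤ k0 := by
      rw [hμ]; split
      · have := hsame_lt ‹_›; omega
      · omega
    have hμ1 : B1.level = μ ∨ B1.level + 1 = μ := by rw [hμ]; split <;> omega
    have hμ2 : B2.level = μ ∨ B2.level + 1 = μ := by rw [hμ]; split <;> omega
    have hnotboth : ¬ (B1.level = μ ∧ B2.level = μ) := by
      rw [hμ]; split
      · omega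
      · rename_i hq; intro hcon; exact hq (hcon.1.trans hcon.2.symm)
    -- the top boxes H1, H2
    set H1 : Box d k0 := if B1.level < μ then parentBox B1 else B1 with hH1def
    set H2 : Box d k0 := if B2.level < μ then parentBox B2 else B2 with hH2def
    have hH1 : H1.level = μ ∧ H1 ≠ B2 ∧
        (∀ k, boxLo D0 H1 k ≤ x k + ((u k : ℤ) : ℝ) * L ∧
          x k + ((u k : ℤ) : ℝ) * L ≤ boxHi D0 H1 k) ∧
        (B1 = H1 ∨ (boxGraph d k0 D0 L).Adj B1 H1) := by
      by_cases hc1 : B1.level < μ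
      · have hlk1 : B1.level < k0 := by omega
        have hH1p : H1 = parentBox B1 := by rw [hH1def, if_pos hc1]
        have hlvl : H1.level = μ := by
          rw [hH1p, parent_level hlk1]; omega
        refine ⟨hlvl, by rw [hH1p]; exact hD1, fun k => ?_, Or.inr ?_⟩
        · have hps := parent_sub hD0 hlk1 k
          have hw := hWB1 k
          rw [hH1p]
          exact ⟨le_trans hps.1 hw.1, le_trans hw.2 hps.2⟩
        · refine box_adj_sub hd hD0 ?_ (fun k => by rw [hH1p]; exact parent_sub hD0 hlk1 k)
            (w0 := wLow d μ) ?_ ?_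
          · exact box_ne_of_level (by rw [hlvl]; omega)
          · rw [show μ = B1.level + 1 by omega]
            exact wLow_succ_mem_clW hd hlk1
          · rw [hlvl]; exact wLow_mem_clW hd μ
      · have hH1b : H1 = B1 := by rw [hH1def, if_neg hc1]
        have hlvl : H1.level = μ := by rw [hH1b]; omega
        exact ⟨hlvl, hH1b ▸ hne, fun k => hH1b ▸ hWB1 k, Or.inl hH1b.symm⟩
    have hH2 : H2.level = μ ∧ H2 ≠ B1 ∧
        (∀ k, boxLo D0 H2 k ≤ x k + ((0 : ℤ) : ℝ) * L ∧
          x k + ((0 : ℤ) : ℝ) * L ≤ boxHi D0 H2 k) ∧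
        (B2 = H2 ∨ (boxGraph d k0 D0 L).Adj B2 H2) := by
      by_cases hc2 : B2.level < μ
      · have hlk2 : B2.level < k0 := by omega
        have hH2p : H2 = parentBox B2 := by rw [hH2def, if_pos hc2]
        have hlvl : H2.level = μ := by
          rw [hH2p, parent_level hlk2]; omega
        refine ⟨hlvl, by rw [hH2p]; exact hD2, fun k => ?_, Or.inr ?_⟩
        · have hps := parent_sub hD0 hlk2 k
          have hw := hWB2 k
          rw [hH2p]
          exact ⟨le_trans hps.1 hw.1, le_trans hw.2 hps.2⟩
        · refine box_adj_sub hd hD0 ?_ (fun k => by rw [hH2p]; exact parent_sub hD0 hlk2 k)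
            (w0 := wLow d μ) ?_ ?_
          · exact box_ne_of_level (by rw [hlvl]; omega)
          · rw [show μ = B2.level + 1 by omega]
            exact wLow_succ_mem_clW hd hlk2
          · rw [hlvl]; exact wLow_mem_clW hd μ
      · have hH2b : H2 = B2 := by rw [hH2def, if_neg hc2]
        have hlvl : H2.level = μ := by rw [hH2b]; omega
        exact ⟨hlvl, hH2b ▸ hne.symm, fun k => hH2b ▸ hWB2 k, Or.inl hH2b.symm⟩
    obtain ⟨hH1lvl, hH1ne2, hWH1, hB1H1⟩ := hH1
    obtain ⟨hH2lvl, hH2ne1, hWH2, hB2H2⟩ := hH2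
    -- index bounds at level μ
    have hIpos : ∀ k, 1 ≤ H1.idx k := H1.idx_pos
    have hJpos : ∀ k, 1 ≤ H2.idx k := H2.idx_pos
    have hIle : ∀ k, H1.idx k ≤ 2 ^ (k0 - μ) := fun k => by
      rw [← hH1lvl]; exact H1.idx_le k
    have hJle : ∀ k, H2.idx k ≤ 2 ^ (k0 - μ) := fun k => by
      rw [← hH2lvl]; exact H2.idx_le k
    -- witnesses in loF form at level μ
    have hWH1μ : ∀ k, loF D0 μ (H1.idx k) ≤ x k + ((u k : ℤ) : ℝ) * L ∧
        x k + ((u k : ℤ) : ℝ) * L ≤ hiF D0 μ (H1.idx k) := fun k => by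
      rw [← hH1lvl]; exact hWH1 k
    have hWH2μ : ∀ k, loF D0 μ (H2.idx k) ≤ x k + ((0 : ℤ) : ℝ) * L ∧
        x k + ((0 : ℤ) : ℝ) * L ≤ hiF D0 μ (H2.idx k) := fun k => by
      rw [← hH2lvl]; exact hWH2 k
    -- the interpolating chain
    set X : ℕ → Box d k0 := fun t =>
      { level := μ
        idx := fun k => if (k : ℕ) < t then H2.idx k else H1.idx k
        level_le := hμk
        idx_pos := fun k => by split; exacts [hJpos k, hIpos k]
        idx_le := fun k => by split; exacts [hJle k, hIle k] } with hXdef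
    have hXlvl : ∀ t, (X t).level = μ := fun t => rfl
    have hX0 : X 0 = H1 :=
      Box.ext hH1lvl.symm (funext fun k => by simp [hXdef])
    have hXd : X d = H2 :=
      Box.ext hH2lvl.symm (funext fun k => by simp [hXdef, k.isLt])
    have hWX : ∀ t k, loF D0 μ ((X t).idx k) ≤
          x k + (((if (k : ℕ) < t then 0 else u k : ℤ)) : ℝ) * L ∧
        x k + (((if (k : ℕ) < t then 0 else u k : ℤ)) : ℝ) * L ≤ hiF D0 μ ((X t).idx k) := by
      intro t k
      by_cases hkt : (k : ℕ) < t
      · simp only [hXdef, if_pos hkt]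
        exact hWH2μ k
      · simp only [hXdef, if_neg hkt]
        exact hWH1μ k
    -- the vertex set
    set S : Set (Box d k0) := insert B1 (insert B2 {C | ∃ t, t ≤ d ∧ C = X t}) with hSdef
    have hB1S : B1 ∈ S := Set.mem_insert _ _
    have hB2S : B2 ∈ S := Set.mem_insert_of_mem _ (Set.mem_insert _ _)
    have hXS : ∀ t, t ≤ d → X t ∈ S := fun t ht =>
      Set.mem_insert_of_mem _ (Set.mem_insert_of_mem _ ⟨t, ht, rfl⟩)
    -- the clique property
    have hwitAll : ∀ C ∈ S, ∃ σ : Fin d → ℤ,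
        (∀ k, boxLo D0 C k ≤ x k + ((σ k : ℤ) : ℝ) * L ∧
          x k + ((σ k : ℤ) : ℝ) * L ≤ boxHi D0 C k) ∧
        wLow d μ ∈ clW d k0 C.level := by
      intro C hC
      rcases hC with hCB | hC
      · refine ⟨u, hCB ▸ hWB1, ?_⟩
        rcases hμ1 with h | h
        · have hc : clW d k0 C.level = clW d k0 μ := by rw [hCB, h]
          rw [hc]
          exact wLow_mem_clW hd μ
        · have hc : clW d k0 C.level = clW d k0 B1.level := by rw [hCB]
          rw [hc, ← h]
          exact wLow_succ_mem_clW hd (by omega)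
      rcases hC with hCB | hC
      · refine ⟨0, fun k => (hCB ▸ hWB2) k, ?_⟩
        rcases hμ2 with h | h
        · have hc : clW d k0 C.level = clW d k0 μ := by rw [hCB, h]
          rw [hc]
          exact wLow_mem_clW hd μ
        · have hc : clW d k0 C.level = clW d k0 B2.level := by rw [hCB]
          rw [hc, ← h]
          exact wLow_succ_mem_clW hd (by omega)
      obtain ⟨t, htd, rfl⟩ := hC
      refine ⟨fun k => if (k : ℕ) < t then 0 else u k, fun k => hWX t k, ?_⟩
      rw [hXlvl t]
      exact wLow_mem_clW hd μ
    have hclique : S.Pairwise (gPlusGraph d k0 D0 L).Adj := by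
      intro a ha b hb hab
      obtain ⟨σa, hwa, hωa⟩ := hwitAll a ha
      obtain ⟨σb, hwb, hωb⟩ := hwitAll b hb
      exact gplus_of_witness hd hD0 hab x (wLow d μ) σa σb hwa hωa hwb hωb
    -- reachability
    set K := onSet ((boxGraph d k0 D0 L).deleteEdges {s(B1, B2)}) S with hKdef
    have hXne12 : ∀ t t', ¬ (X t = B1 ∧ X t' = B2) := by
      rintro t t' ⟨h1, h2⟩
      exact hnotboth ⟨by rw [← h1], by rw [← h2]⟩
    have hstep : ∀ t, t < d → K.Reachable (X t) (X (t + 1)) := by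
      intro t ht
      by_cases hIJ : H1.idx ⟨t, ht⟩ = H2.idx ⟨t, ht⟩
      · have hXeq : X t = X (t + 1) := by
          refine Box.ext rfl (funext fun k => ?_)
          show (if (k : ℕ) < t then H2.idx k else H1.idx k) =
            (if (k : ℕ) < t + 1 then H2.idx k else H1.idx k)
          by_cases hklt : (k : ℕ) < t
          · rw [if_pos hklt, if_pos (by omega)]
          · by_cases hkeq : (k : ℕ) = t
            · have hk : k = ⟨t, ht⟩ := Fin.ext hkeq
              rw [if_neg hklt, if_pos (by omega), hk, hIJ]
            · rw [if_neg hklt, if_neg (by omega)]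
        rw [hXeq]
      · have hXne : X t ≠ X (t + 1) := by
          apply box_ne_of_idx (k := ⟨t, ht⟩)
          show (if t < t then H2.idx ⟨t, ht⟩ else H1.idx ⟨t, ht⟩) ≠
            (if t < t + 1 then H2.idx ⟨t, ht⟩ else H1.idx ⟨t, ht⟩)
          rw [if_neg (by omega), if_pos (by omega)]
          exact hIJ
        have hadj : (boxGraph d k0 D0 L).Adj (X t) (X (t + 1)) := by
          refine box_adj_step hd hD0 hXne ⟨t, ht⟩
            (fun k => if (k : ℕ) < t then 0 else u k)
            (fun k => if (k : ℕ) < t + 1 then 0 else u k)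
            (x ⟨t, ht⟩) ?_ ?_ ?_
            (wLow_lt_wLow hd (Nat.lt_succ_self μ)) ?_ ?_
          · have h' := hWX t ⟨t, ht⟩
            simpa [boxLo, boxHi] using h'
          · have h' := hWX (t + 1) ⟨t, ht⟩
            simpa [boxLo, boxHi] using h'
          · intro k hk
            have hkt : (k : ℕ) ≠ t := fun hcon => hk (Fin.ext hcon)
            unfold boxLo boxHi
            by_cases hklt : (k : ℕ) < t
            · simp only [hXdef, if_pos hklt, if_pos (show (k : ℕ) < t + 1 by omega)]
              exact ⟨trivial, trivial⟩
            · simp only [hXdef, if_neg hklt, if_neg (show ¬ (k : ℕ) < t + 1 by omega)]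
              exact ⟨trivial, trivial⟩
          · exact Icc_subset_clW μ
          · exact Icc_subset_clW μ
        refine SimpleGraph.Adj.reachable ⟨hXS t (by omega), hXS (t + 1) (by omega), ?_⟩
        rw [SimpleGraph.deleteEdges_adj]
        refine ⟨hadj, ?_⟩
        simp only [Set.mem_singleton_iff, Sym2.eq_iff]
        rintro (⟨h1, h2⟩ | ⟨h1, h2⟩)
        · exact hXne12 t (t + 1) ⟨h1, h2⟩
        · exact hXne12 (t + 1) t ⟨h2, h1⟩
    have hchain : ∀ m t, t + m = d → K.Reachable (X t) (X d) := by
      intro m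
      induction m with
      | zero =>
        intro t htd
        rw [show t = d by omega]
      | succ m ih =>
        intro t htd
        exact (hstep t (by omega)).trans (ih (t + 1) (by omega))
    have hreach1 : K.Reachable B1 (X 0) := by
      rcases hB1H1 with h | h
      · rw [hX0, ← h]
      · refine SimpleGraph.Adj.reachable ⟨hB1S, hX0 ▸ hXS 0 (by omega), ?_⟩
        rw [SimpleGraph.deleteEdges_adj, hX0]
        refine ⟨h, ?_⟩
        simp only [Set.mem_singleton_iff, Sym2.eq_iff]
        rintro (⟨-, h2⟩ | ⟨h1, -⟩)
        exacts [hH1ne2 h2, hne h1]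
    have hreach2 : K.Reachable (X d) B2 := by
      rcases hB2H2 with h | h
      · rw [hXd, ← h]
      · refine SimpleGraph.Reachable.symm
          (SimpleGraph.Adj.reachable ⟨hB2S, hXd ▸ hXS d (by omega), ?_⟩)
        rw [SimpleGraph.deleteEdges_adj, hXd]
        refine ⟨h, ?_⟩
        simp only [Set.mem_singleton_iff, Sym2.eq_iff]
        rintro (⟨h1, -⟩ | ⟨-, h2⟩)
        exacts [hne h1.symm, hH2ne1 h2]
    exact build hd S hB1S hclique (hreach1.trans ((hchain d 0 (by omega)).trans hreach2))
end

section
/- Let z, x1, x2 be vertices of a weighted configuration with weights w_z, w_{x1}, w_{x2} and positions x_z, x_{x1}, x_{x2} in the torus with max-norm distance dist. Suppose that for j = 1, 2 one has w_{x_j} ≥ 2^d·w_z and dist(x_{x_j}, x_z)^d ≤ w_{x_j}·w_z (i.e. x1 and x2 both satisfy the connection threshold towards z with the high-weight condition, as do all elements of S_high(B) towards a vertex z of the box B). Then w_{x1}·w_{x2} ≥ dist(x_{x1}, x_{x2})^d, i.e. x1 and x2 satisfy the threshold connection rule between themselves. -/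
open MeasureTheory ProbabilityTheory Filter Set

lemma coordInf_bdd (L a : ℝ) : BddBelow (Set.range fun m : ℤ => |a - m * L|) :=
  ⟨0, by rintro r ⟨m, rfl⟩; positivity⟩

lemma torusDist_nonneg {d : ℕ} (hd : 1 ≤ d) (L : ℝ) (x y : Fin d → ℝ) :
    0 ≤ torusDist L x y := by
  have k : Fin d := ⟨0, hd⟩
  have h1 : (0 : ℝ) ≤ ⨅ m : ℤ, |x k - y k - m * L| :=
    le_ciInf fun m => abs_nonneg _
  unfold torusDist
  exact h1.trans (le_ciSup (f := fun k => ⨅ m : ℤ, |x k - y k - m * L|)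
    (Set.Finite.bddAbove (Set.finite_range _)) k)

lemma torusDist_triangle {d : ℕ} (hd : 1 ≤ d) (L : ℝ) (x y z : Fin d → ℝ) :
    torusDist L x z ≤ torusDist L x y + torusDist L y z := by
  haveI : Nonempty (Fin d) := ⟨⟨0, hd⟩⟩
  refine ciSup_le fun k => ?_
  have step1 : (⨅ m : ℤ, |x k - z k - m * L|) ≤
      (⨅ m : ℤ, |x k - y k - m * L|) + ⨅ m : ℤ, |y k - z k - m * L| := by
    refine le_ciInf_add_ciInf fun m1 m2 => ?_
    refine (ciInf_le (coordInf_bdd L _) (m1 + m2)).trans ?_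
    have : x k - z k - ((m1 + m2 : ℤ) : ℝ) * L =
        (x k - y k - (m1 : ℝ) * L) + (y k - z k - (m2 : ℝ) * L) := by
      push_cast; ring
    rw [this]
    exact abs_add_le _ _
  refine step1.trans (add_le_add ?_ ?_) <;> unfold torusDist
  · exact le_ciSup (f := fun k => ⨅ m : ℤ, |x k - y k - m * L|)
      (Set.Finite.bddAbove (Set.finite_range _)) k
  · exact le_ciSup (f := fun k => ⨅ m : ℤ, |y k - z k - m * L|)
      (Set.Finite.bddAbove (Set.finite_range _)) k

/-- Let `z, x1, x2` be vertices of a weighted configuration on the torus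
`[0, n^{1/d}]^d` with the max-norm torus distance.  If for `j = 1, 2` the vertex `x_j`
satisfies the high-weight condition `w_{x_j} ≥ 2^d * w_z` and the connection threshold
towards `z`, i.e. `dist(x_{x_j}, x_z)^d ≤ w_{x_j} * w_z`, then `x1` and `x2` satisfy the
threshold connection rule between themselves: `dist(x_{x1}, x_{x2})^d ≤ w_{x1} * w_{x2}`. -/
theorem statement_19 (d n : ℕ) (hd : 1 ≤ d)
    (wz w1 w2 : ℝ) (xz x1 x2 : Fin d → ℝ)
    (hwz : 1 ≤ wz) (hw1 : 1 ≤ w1) (hw2 : 1 ≤ w2)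
    (hx : ∀ k, 0 ≤ xz k ∧ xz k ≤ (n : ℝ) ^ ((1 : ℝ) / d))
    (hx1 : ∀ k, 0 ≤ x1 k ∧ x1 k ≤ (n : ℝ) ^ ((1 : ℝ) / d))
    (hx2 : ∀ k, 0 ≤ x2 k ∧ x2 k ≤ (n : ℝ) ^ ((1 : ℝ) / d))
    (hhigh1 : 2 ^ d * wz ≤ w1) (hhigh2 : 2 ^ d * wz ≤ w2)
    (hconn1 : torusDist ((n : ℝ) ^ ((1 : ℝ) / d)) x1 xz ^ d ≤ w1 * wz)
    (hconn2 : torusDist ((n : ℝ) ^ ((1 : ℝ) / d)) x2 xz ^ d ≤ w2 * wz) :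
    torusDist ((n : ℝ) ^ ((1 : ℝ) / d)) x1 x2 ^ d ≤ w1 * w2 := by
  set L := (n : ℝ) ^ ((1 : ℝ) / d)
  have hwz0 : (0 : ℝ) ≤ wz := le_trans zero_le_one hwz
  set d1 := torusDist L x1 xz with hd1
  set d2 := torusDist L xz x2 with hd2
  have hd10 : 0 ≤ d1 := torusDist_nonneg hd L _ _
  have hd20 : 0 ≤ d2 := torusDist_nonneg hd L _ _
  have hconn2' : d2 ^ d ≤ w2 * wz := by
    rw [hd2, torusDist_symm]; exact hconn2
  have htri : torusDist L x1 x2 ≤ d1 + d2 := torusDist_triangle hd L x1 xz x2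
  have hD0 : 0 ≤ torusDist L x1 x2 := torusDist_nonneg hd L _ _
  have h1 : torusDist L x1 x2 ^ d ≤ (d1 + d2) ^ d := pow_le_pow_left₀ hD0 htri d
  refine h1.trans ?_
  rcases le_total d1 d2 with hle | hle
  · have h2 : (d1 + d2) ^ d ≤ (2 * d2) ^ d :=
      pow_le_pow_left₀ (by linarith) (by linarith) d
    refine h2.trans ?_
    rw [mul_pow]
    calc 2 ^ d * d2 ^ d ≤ 2 ^ d * (w2 * wz) := by
          exact mul_le_mul_of_nonneg_left hconn2' (by positivity)
      _ = (2 ^ d * wz) * w2 := by ring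
      _ ≤ w1 * w2 := by
          exact mul_le_mul_of_nonneg_right hhigh1 (by linarith)
  · have h2 : (d1 + d2) ^ d ≤ (2 * d1) ^ d :=
      pow_le_pow_left₀ (by linarith) (by linarith) d
    refine h2.trans ?_
    rw [mul_pow]
    calc 2 ^ d * d1 ^ d ≤ 2 ^ d * (w1 * wz) := by
          exact mul_le_mul_of_nonneg_left hconn1 (by positivity)
      _ = w1 * (2 ^ d * wz) := by ring
      _ ≤ w1 * w2 := by
          exact mul_le_mul_of_nonneg_left hhigh2 (by linarith)
end
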